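/- Fix an integer n ≥ 2. There exists a constant c > 0 (depending only on n) such that for every integer H ≥ 2, 𝐒_n(H) ≥ c · H^{n² − 2n + 2}. -/

import Mathlib

/-- `Farey H` is the set `F(H)` of nonnegative rationals of height at most `H`,
where the height of `α = s/r` (in lowest terms, `r ≥ 1`) is `max {|s|, r}`. -/
def Farey (H : ℕ) : Set ℚ := {α : ℚ | 0 ≤ α ∧ α.num.natAbs ≤ H ∧ α.den ≤ H}

/-- `doublyStochCount n H = 𝐒ₙ(H)` is the number of `n × n` doubly stochastic
matrices (nonnegative entries, all rows and all columns summing to `1`) with all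
entries in `F(H)`. -/
noncomputable def doublyStochCount (n H : ℕ) : ℕ :=
  Nat.card {A : Matrix (Fin n) (Fin n) ℚ //
    (∀ i j, A i j ∈ Farey H) ∧ (∀ i, ∑ j, A i j = 1) ∧ (∀ j, ∑ i, A i j = 1)}

open Finset


/-- Row sum of the parameter grid. -/
def DSCBrow (m : ℕ) (g : Fin (m+1) × Fin (m+1) → ℕ) (i : Fin (m+1)) : ℕ := ∑ j, g (i, j)

/-- Column sum of the parameter grid. -/
def DSCBcol (m : ℕ) (g : Fin (m+1) × Fin (m+1) → ℕ) (j : Fin (m+1)) : ℕ := ∑ i, g (i, j)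

/-- Total sum of the parameter grid. -/
def DSCBS (m : ℕ) (g : Fin (m+1) × Fin (m+1) → ℕ) : ℕ := ∑ i, DSCBrow m g i

/-- Integer numerator matrix. -/
def DSCBN (m q : ℕ) (g : Fin (m+1) × Fin (m+1) → ℕ) :
    Matrix (Fin (m+2)) (Fin (m+2)) ℤ :=
  Matrix.of fun i j =>
    Fin.cases
      (Fin.cases ((q : ℤ) - DSCBS m g) (fun j' => (DSCBrow m g j' : ℤ)) j)
      (fun i' =>
        Fin.cases ((DSCBcol m g i' : ℤ))
          (fun j' => if i' = j' then
              (q : ℤ) - DSCBrow m g i' - DSCBcol m g i' + g (i', i')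
            else (g (i', j') : ℤ)) j) i

@[simp] lemma DSCBN_zz (m q : ℕ) (g) : DSCBN m q g 0 0 = (q : ℤ) - DSCBS m g := rfl

@[simp] lemma DSCBN_zs (m q : ℕ) (g) (j : Fin (m+1)) :
    DSCBN m q g 0 j.succ = (DSCBrow m g j : ℤ) := rfl

@[simp] lemma DSCBN_sz (m q : ℕ) (g) (i : Fin (m+1)) :
    DSCBN m q g i.succ 0 = (DSCBcol m g i : ℤ) := rfl

@[simp] lemma DSCBN_ss (m q : ℕ) (g) (i j : Fin (m+1)) :
    DSCBN m q g i.succ j.succ = if i = j then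
        (q : ℤ) - DSCBrow m g i - DSCBcol m g i + g (i, i)
      else (g (i, j) : ℤ) := rfl

lemma DSCBS_eq_sum_col (m : ℕ) (g) : DSCBS m g = ∑ j, DSCBcol m g j := by
  rw [DSCBS]
  simp only [DSCBrow, DSCBcol]
  rw [Finset.sum_comm]

lemma DSCB_row_sum (m q : ℕ) (g) (i : Fin (m+2)) :
    ∑ j, DSCBN m q g i j = (q : ℤ) := by
  induction i using Fin.cases with
  | zero =>
    rw [Fin.sum_univ_succ]
    simp [DSCBS]
  | succ i' =>
    rw [Fin.sum_univ_succ]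
    simp only [DSCBN_sz, DSCBN_ss]
    have h1 : ∑ j : Fin (m+1), (if i' = j then
        (q : ℤ) - DSCBrow m g i' - DSCBcol m g i' + g (i', i')
      else (g (i', j) : ℤ))
        = ((q : ℤ) - DSCBrow m g i' - DSCBcol m g i' + g (i', i'))
          + ∑ j ∈ univ.erase i', (g (i', j) : ℤ) := by
      rw [← Finset.add_sum_erase _ _ (mem_univ i')]
      simp only [if_pos rfl]
      congr 1
      exact Finset.sum_congr rfl fun j hj => if_neg (Ne.symm (Finset.mem_erase.1 hj).1)
    have h2 : ∑ j ∈ univ.erase i', (g (i', j) : ℤ) = (DSCBrow m g i' : ℤ) - g (i', i') := by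
      have : (DSCBrow m g i' : ℤ) = ∑ j, (g (i', j) : ℤ) := by
        simp [DSCBrow]
      rw [this, ← Finset.add_sum_erase _ _ (mem_univ i')]
      ring
    rw [h1, h2]
    ring

lemma DSCB_col_sum (m q : ℕ) (g) (j : Fin (m+2)) :
    ∑ i, DSCBN m q g i j = (q : ℤ) := by
  induction j using Fin.cases with
  | zero =>
    rw [Fin.sum_univ_succ]
    simp [DSCBS_eq_sum_col]
  | succ j' =>
    rw [Fin.sum_univ_succ]
    simp only [DSCBN_zs, DSCBN_ss]
    have h1 : ∑ i : Fin (m+1), (if i = j' then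
        (q : ℤ) - DSCBrow m g i - DSCBcol m g i + g (i, i)
      else (g (i, j') : ℤ))
        = ((q : ℤ) - DSCBrow m g j' - DSCBcol m g j' + g (j', j'))
          + ∑ i ∈ univ.erase j', (g (i, j') : ℤ) := by
      rw [← Finset.add_sum_erase _ _ (mem_univ j')]
      simp only [if_pos rfl]
      congr 1
      exact Finset.sum_congr rfl fun i hi => if_neg (Finset.mem_erase.1 hi).1
    have h2 : ∑ i ∈ univ.erase j', (g (i, j') : ℤ) = (DSCBcol m g j' : ℤ) - g (j', j') := by
      have : (DSCBcol m g j' : ℤ) = ∑ i, (g (i, j') : ℤ) := by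
        simp [DSCBcol]
      rw [this, ← Finset.add_sum_erase _ _ (mem_univ j')]
      ring
    rw [h1, h2]
    ring

lemma farey_mem (H q : ℕ) (u : ℤ) (hu0 : 0 ≤ u) (huq : u ≤ (q : ℤ)) (hq : 0 < q) (hqH : q ≤ H) :
    ((u : ℚ) / (q : ℚ)) ∈ Farey H := by
  set α : ℚ := (u : ℚ) / (q : ℚ) with hα
  have hq0 : (0:ℚ) < (q:ℚ) := by exact_mod_cast hq
  have hα0 : 0 ≤ α := div_nonneg (by exact_mod_cast hu0) hq0.le
  have hα1 : α ≤ 1 := by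
    rw [hα, div_le_one hq0]
    exact_mod_cast huq
  have hden : α.den ≤ H := by
    have hdvd : (α.den : ℤ) ∣ (q : ℤ) := by
      have := Rat.den_dvd u (q : ℤ)
      rwa [Rat.divInt_eq_div] at this
    have : α.den ∣ q := Int.ofNat_dvd.mp hdvd
    exact le_trans (Nat.le_of_dvd hq this) hqH
  refine ⟨hα0, ?_, hden⟩
  have hnum0 : 0 ≤ α.num := Rat.num_nonneg.mpr hα0
  have hnd : α.num ≤ (α.den : ℤ) := by
    have hd : (0:ℚ) < (α.den : ℚ) := by exact_mod_cast α.pos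
    have h1 : (α.num : ℚ) = α * α.den := by
      nth_rewrite 2 [← Rat.num_div_den α]
      field_simp
    have h2 : α * α.den ≤ 1 * α.den := mul_le_mul_of_nonneg_right hα1 hd.le
    rw [one_mul] at h2
    exact_mod_cast h1 ▸ h2
  calc α.num.natAbs ≤ α.den := by omega
    _ ≤ H := hden

lemma odd_prime_sq_sum (H : ℕ) :
    ∑ p ∈ (range (H+1)).filter (fun p => p.Prime ∧ p ≠ 2), (1:ℝ)/(p:ℝ)^2 ≤ 17/72 := by
  have hsub : (range (H+1)).filter (fun p => p.Prime ∧ p ≠ 2)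
      ⊆ (range (H+1)).image (fun k => 2*k+3) := by
    intro p hp
    simp only [mem_filter, mem_range] at hp
    obtain ⟨hpH, hp, h2⟩ := hp
    have hodd : Odd p := hp.odd_of_ne_two h2
    have h3 : 3 ≤ p := by
      rcases hodd with ⟨k, hk⟩
      have := hp.two_le
      omega
    simp only [mem_image, mem_range]
    refine ⟨(p - 3)/2, by omega, ?_⟩
    rcases hodd with ⟨k, hk⟩
    omega
  have h1 : ∑ p ∈ (range (H+1)).filter (fun p => p.Prime ∧ p ≠ 2), (1:ℝ)/(p:ℝ)^2
      ≤ ∑ p ∈ ((range (H+1)).image (fun k : ℕ => 2*k+3) : Finset ℕ), (1:ℝ)/(p:ℝ)^2 := by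
    apply Finset.sum_le_sum_of_subset_of_nonneg hsub
    intro i _ _
    positivity
  have h2 : ∑ p ∈ ((range (H+1)).image (fun k : ℕ => 2*k+3) : Finset ℕ), (1:ℝ)/(p:ℝ)^2
      = ∑ k ∈ range (H+1), (1:ℝ)/((2*k+3:ℕ):ℝ)^2 := by
    rw [Finset.sum_image]
    intro a _ b _ h
    dsimp only at h
    omega
  rw [h2] at h1
  -- now bound the telescoping sum
  have h3 : ∑ k ∈ range (H+1), (1:ℝ)/((2*k+3:ℕ):ℝ)^2 ≤ 17/72 := by
    rw [Finset.sum_range_succ'] -- sum f (k+1) over range H + f 0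
    have hf0 : (1:ℝ)/((2*0+3:ℕ):ℝ)^2 = 1/9 := by norm_num
    set f : ℕ → ℝ := fun k => (1:ℝ)/(4*(k:ℝ)+8) with hf
    have htel : ∑ k ∈ range H, (1:ℝ)/((2*(k+1)+3:ℕ):ℝ)^2
        ≤ ∑ k ∈ range H, (f k - f (k+1)) := by
      apply Finset.sum_le_sum
      intro k _
      have hk : (0:ℝ) ≤ (k:ℝ) := Nat.cast_nonneg k
      have e1 : ((2*(k+1)+3:ℕ):ℝ) = 2*(k:ℝ)+5 := by push_cast; ring
      rw [e1]
      have h4 : (1:ℝ)/(4*(k:ℝ)+8) - 1/(4*((k:ℝ)+1)+8) = 4/((4*(k:ℝ)+8)*(4*(k:ℝ)+12)) := by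
        field_simp
        ring
      have h5 : (1:ℝ)/(2*(k:ℝ)+5)^2 ≤ 4/((4*(k:ℝ)+8)*(4*(k:ℝ)+12)) := by
        rw [div_le_div_iff₀ (by positivity) (by positivity)]
        nlinarith
      have e2 : f k - f (k+1) = (1:ℝ)/(4*(k:ℝ)+8) - 1/(4*((k:ℝ)+1)+8) := by
        simp only [hf]; push_cast; ring_nf
      rw [e2, ← h4] at *
      linarith [h5, h4]
    rw [Finset.sum_range_sub' f] at htel
    have hend : f 0 - f H ≤ 1/8 := by
      have h6 : (0:ℝ) ≤ f H := by simp only [hf]; positivity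
      have h7 : f 0 = 1/8 := by simp [hf]
      linarith
    norm_num at hf0 htel hend ⊢
    linarith
  linarith

lemma good_pairs_count (H : ℕ) (hH : 288 ≤ H) :
    ((H:ℝ))^2/576 ≤
      ((((Finset.Ioc (H/2) H) ×ˢ ((range (H/8)).image (fun k => 2*k+1))).filter
        (fun z => Nat.Coprime z.2 z.1)).card : ℝ) := by
  set Q : Finset ℕ := Finset.Ioc (H/2) H with hQ
  set A : Finset ℕ := (range (H/8)).image (fun k => 2*k+1) with hA
  set P : Finset ℕ := (range (H+1)).filter (fun p => p.Prime ∧ p ≠ 2) with hP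
  -- the complement is contained in a union over primes
  have hbadsub : (Q ×ˢ A).filter (fun z => ¬ Nat.Coprime z.2 z.1)
      ⊆ P.biUnion (fun p => (Q.filter (p ∣ ·)) ×ˢ (A.filter (p ∣ ·))) := by
    rintro ⟨q, a⟩ hz
    simp only [mem_filter, mem_product] at hz
    obtain ⟨⟨hq, ha⟩, hnc⟩ := hz
    obtain ⟨p, hp, hpd⟩ := Nat.exists_prime_and_dvd (n := Nat.gcd a q) (by
      intro h1
      exact hnc h1)
    have hpa : p ∣ a := hpd.trans (Nat.gcd_dvd_left _ _)
    have hpq : p ∣ q := hpd.trans (Nat.gcd_dvd_right _ _)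
    have hq1 : 1 ≤ q := by
      simp only [hQ, mem_Ioc] at hq; omega
    have hpH : p ≤ H := le_trans (Nat.le_of_dvd hq1 hpq) (by simp only [hQ, mem_Ioc] at hq; omega)
    have hp2 : p ≠ 2 := by
      rintro rfl
      simp only [hA, mem_image, mem_range] at ha
      obtain ⟨k, _, rfl⟩ := ha
      omega
    simp only [mem_biUnion, hP, mem_filter, mem_range, mem_product]
    exact ⟨p, ⟨by omega, hp, hp2⟩, ⟨by simp [mem_filter, hq, hpq], by simp [mem_filter, ha, hpa]⟩⟩
  -- cardinality of the bad set
  have hAsub : A ⊆ Finset.Ioc 0 (H/4) := by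
    intro a ha
    simp only [hA, mem_image, mem_range] at ha
    obtain ⟨k, hk, rfl⟩ := ha
    have h1 : 2*(H/8) ≤ H/4 := by
      have : H/8 = (H/4)/2 := by omega
      rw [this]; omega
    simp only [mem_Ioc]
    omega
  have hbadcard : (((Q ×ˢ A).filter (fun z => ¬ Nat.Coprime z.2 z.1)).card : ℝ)
      ≤ ∑ p ∈ P, ((H/p : ℕ) : ℝ) * (((H/4)/p : ℕ) : ℝ) := by
    have h1 : ((Q ×ˢ A).filter (fun z => ¬ Nat.Coprime z.2 z.1)).card
        ≤ ∑ p ∈ P, (Q.filter (p ∣ ·)).card * (A.filter (p ∣ ·)).card := by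
      calc _ ≤ (P.biUnion (fun p => (Q.filter (p ∣ ·)) ×ˢ (A.filter (p ∣ ·)))).card :=
            Finset.card_le_card hbadsub
        _ ≤ ∑ p ∈ P, ((Q.filter (p ∣ ·)) ×ˢ (A.filter (p ∣ ·))).card := Finset.card_biUnion_le
        _ = ∑ p ∈ P, (Q.filter (p ∣ ·)).card * (A.filter (p ∣ ·)).card := by
            simp [Finset.card_product]
    have h2 : ∀ p ∈ P, (Q.filter (p ∣ ·)).card * (A.filter (p ∣ ·)).card
        ≤ (H/p) * ((H/4)/p) := by
      intro p _
      have hq : (Q.filter (p ∣ ·)).card ≤ H/p := by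
        rw [← Nat.Ioc_filter_dvd_card_eq_div]
        apply Finset.card_le_card
        apply Finset.filter_subset_filter
        intro x hx
        simp only [hQ, mem_Ioc] at hx ⊢
        omega
      have ha : (A.filter (p ∣ ·)).card ≤ (H/4)/p := by
        rw [← Nat.Ioc_filter_dvd_card_eq_div]
        exact Finset.card_le_card (Finset.filter_subset_filter _ hAsub)
      exact Nat.mul_le_mul hq ha
    calc (((Q ×ˢ A).filter (fun z => ¬ Nat.Coprime z.2 z.1)).card : ℝ)
        ≤ ((∑ p ∈ P, (Q.filter (p ∣ ·)).card * (A.filter (p ∣ ·)).card : ℕ) : ℝ) := by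
          exact_mod_cast h1
      _ ≤ ((∑ p ∈ P, (H/p) * ((H/4)/p) : ℕ) : ℝ) := by
          exact_mod_cast Finset.sum_le_sum h2
      _ = ∑ p ∈ P, ((H/p : ℕ) : ℝ) * (((H/4)/p : ℕ) : ℝ) := by push_cast; ring_nf
  -- bound the sum by 17/288 H^2
  have hsumbound : ∑ p ∈ P, ((H/p : ℕ) : ℝ) * (((H/4)/p : ℕ) : ℝ) ≤ 17/288 * (H:ℝ)^2 := by
    have h3 : ∀ p ∈ P, ((H/p : ℕ) : ℝ) * (((H/4)/p : ℕ) : ℝ)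
        ≤ ((H:ℝ)^2/4) * (1/(p:ℝ)^2) := by
      intro p hp
      simp only [hP, mem_filter, mem_range] at hp
      have hp0 : (0:ℝ) < (p:ℝ) := by exact_mod_cast hp.2.1.pos
      have e1 : ((H/p : ℕ) : ℝ) ≤ (H:ℝ)/(p:ℝ) := Nat.cast_div_le
      have e2 : (((H/4)/p : ℕ) : ℝ) ≤ ((H/4 : ℕ):ℝ)/(p:ℝ) := Nat.cast_div_le
      have e3 : ((H/4 : ℕ):ℝ) ≤ (H:ℝ)/4 := Nat.cast_div_le
      have e4 : (((H/4)/p : ℕ) : ℝ) ≤ (H:ℝ)/4/(p:ℝ) := by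
        apply le_trans e2
        gcongr
      have h5 : (0:ℝ) ≤ ((H/p : ℕ) : ℝ) := Nat.cast_nonneg _
      have h6 : (0:ℝ) ≤ (H:ℝ)/(p:ℝ) := by positivity
      calc ((H/p : ℕ) : ℝ) * (((H/4)/p : ℕ) : ℝ) ≤ ((H:ℝ)/(p:ℝ)) * ((H:ℝ)/4/(p:ℝ)) := by
            apply mul_le_mul e1 e4 (Nat.cast_nonneg _) h6
        _ = ((H:ℝ)^2/4) * (1/(p:ℝ)^2) := by field_simp
    calc ∑ p ∈ P, ((H/p : ℕ) : ℝ) * (((H/4)/p : ℕ) : ℝ)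
        ≤ ∑ p ∈ P, ((H:ℝ)^2/4) * (1/(p:ℝ)^2) := Finset.sum_le_sum h3
      _ = ((H:ℝ)^2/4) * ∑ p ∈ P, (1:ℝ)/(p:ℝ)^2 := by rw [Finset.mul_sum]
      _ ≤ ((H:ℝ)^2/4) * (17/72) := by
          apply mul_le_mul_of_nonneg_left (odd_prime_sq_sum H) (by positivity)
      _ = 17/288 * (H:ℝ)^2 := by ring
  -- total count
  have hQcard : Q.card = H - H/2 := Nat.card_Ioc _ _
  have hAcard : A.card = H/8 := by
    rw [hA, Finset.card_image_of_injective _ (fun a b h => by omega), Finset.card_range]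
  have htotal : ((Q ×ˢ A).card : ℝ) ≥ ((H:ℝ)/2) * ((H:ℝ)/8 - 1) := by
    rw [Finset.card_product, hQcard, hAcard]
    have e1 : ((H - H/2 : ℕ) : ℝ) ≥ (H:ℝ)/2 := by
      have h1 : (H/2 : ℕ) ≤ H := Nat.div_le_self _ _
      rw [Nat.cast_sub h1]
      have : ((H/2 : ℕ) : ℝ) ≤ (H:ℝ)/2 := Nat.cast_div_le
      linarith
    have e2 : ((H/8 : ℕ) : ℝ) ≥ (H:ℝ)/8 - 1 := by
      have h1 : H < (H/8) * 8 + 8 := by omega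
      have : (H:ℝ) < ((H/8 : ℕ) : ℝ) * 8 + 8 := by exact_mod_cast h1
      linarith
    have h7 : (0:ℝ) ≤ (H:ℝ)/2 := by positivity
    have h8 : (0:ℝ) ≤ (H:ℝ)/8 - 1 := by
      have : (288:ℝ) ≤ (H:ℝ) := by exact_mod_cast hH
      linarith
    push_cast
    nlinarith
  -- combine
  have hsplit : (((Q ×ˢ A).filter (fun z => Nat.Coprime z.2 z.1)).card : ℝ)
      = ((Q ×ˢ A).card : ℝ) - (((Q ×ˢ A).filter (fun z => ¬ Nat.Coprime z.2 z.1)).card : ℝ) := by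
    have h9 := Finset.card_filter_add_card_filter_not
      (s := Q ×ˢ A) (p := fun z => Nat.Coprime z.2 z.1)
    have h10 : (((Q ×ˢ A).filter (fun z => Nat.Coprime z.2 z.1)).card : ℝ)
        + (((Q ×ˢ A).filter (fun z => ¬ Nat.Coprime z.2 z.1)).card : ℝ)
        = ((Q ×ˢ A).card : ℝ) := by exact_mod_cast h9
    linarith
  rw [hsplit]
  have hHr : (288:ℝ) ≤ (H:ℝ) := by exact_mod_cast hH
  nlinarith [hbadcard, hsumbound, htotal]

noncomputable def DSCBE (m q : ℕ) (g : Fin (m+1) × Fin (m+1) → ℕ) :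
    Matrix (Fin (m+2)) (Fin (m+2)) ℚ :=
  Matrix.of fun i j => ((DSCBN m q g i j : ℚ)) / (q : ℚ)

lemma DSCB_cross (m : ℕ) (g) (i : Fin (m+1)) :
    DSCBrow m g i + DSCBcol m g i ≤ DSCBS m g + g (i, i) := by
  have h1 : DSCBS m g = DSCBrow m g i + ∑ k ∈ univ.erase i, DSCBrow m g k :=
    (Finset.add_sum_erase _ _ (mem_univ i)).symm
  have h2 : DSCBcol m g i = g (i, i) + ∑ k ∈ univ.erase i, g (k, i) := by
    rw [DSCBcol, ← Finset.add_sum_erase _ _ (mem_univ i)]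
  have h3 : ∑ k ∈ univ.erase i, g (k, i) ≤ ∑ k ∈ univ.erase i, DSCBrow m g k :=
    Finset.sum_le_sum fun k _ =>
      Finset.single_le_sum (f := fun j => g (k, j)) (fun _ _ => Nat.zero_le _) (mem_univ i)
  omega

lemma DSCBN_bounds (m q : ℕ) (g) (hS : DSCBS m g ≤ q) (i j : Fin (m+2)) :
    0 ≤ DSCBN m q g i j ∧ DSCBN m q g i j ≤ (q : ℤ) := by
  have hrow : ∀ i', DSCBrow m g i' ≤ DSCBS m g := fun i' =>
    Finset.single_le_sum (f := DSCBrow m g) (fun _ _ => Nat.zero_le _) (mem_univ i')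
  have hcol : ∀ j', DSCBcol m g j' ≤ DSCBS m g := by
    intro j'
    have : DSCBS m g = ∑ j, DSCBcol m g j := by
      rw [DSCBS]; simp only [DSCBrow, DSCBcol]; rw [Finset.sum_comm]
    rw [this]
    exact Finset.single_le_sum (f := DSCBcol m g) (fun _ _ => Nat.zero_le _) (mem_univ j')
  have hg : ∀ i' j', g (i', j') ≤ DSCBrow m g i' := fun i' j' =>
    Finset.single_le_sum (f := fun j => g (i', j)) (fun _ _ => Nat.zero_le _) (mem_univ j')
  have hcross := DSCB_cross m g
  induction i using Fin.cases with
  | zero =>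
    induction j using Fin.cases with
    | zero => simp only [DSCBN_zz]; omega
    | succ j' =>
      simp only [DSCBN_zs]
      have := hrow j'
      omega
  | succ i' =>
    induction j using Fin.cases with
    | zero =>
      simp only [DSCBN_sz]
      have := hcol i'
      omega
    | succ j' =>
      simp only [DSCBN_ss]
      by_cases hij : i' = j'
      · subst hij
        rw [if_pos rfl]
        have h1 := hcross i'
        have h2 := hg i' i'
        have h3 := hcol i'
        omega
      · rw [if_neg hij]
        have h1 := hg i' j'
        have h2 := hrow i'
        omega

lemma DSCBE_mem (m H q : ℕ) (g) (hq : 0 < q) (hqH : q ≤ H) (hS : DSCBS m g ≤ q) :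
    (∀ i j, DSCBE m q g i j ∈ Farey H) ∧ (∀ i, ∑ j, DSCBE m q g i j = 1)
      ∧ (∀ j, ∑ i, DSCBE m q g i j = 1) := by
  have hq0 : ((q:ℚ)) ≠ 0 := by positivity
  refine ⟨fun i j => ?_, fun i => ?_, fun j => ?_⟩
  · obtain ⟨h1, h2⟩ := DSCBN_bounds m q g hS i j
    exact farey_mem H q _ h1 h2 hq hqH
  · rw [show (∑ j, DSCBE m q g i j) = (∑ j, ((DSCBN m q g i j : ℚ))) / q by
      rw [Finset.sum_div]; rfl]
    have : (∑ j, ((DSCBN m q g i j : ℚ))) = ((q:ℤ):ℚ) := by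
      rw [← Int.cast_sum]
      exact_mod_cast congrArg (fun z : ℤ => (z : ℚ)) (DSCB_row_sum m q g i)
    rw [this]
    push_cast
    field_simp
  · rw [show (∑ i, DSCBE m q g i j) = (∑ i, ((DSCBN m q g i j : ℚ))) / q by
      rw [Finset.sum_div]; rfl]
    have : (∑ i, ((DSCBN m q g i j : ℚ))) = ((q:ℤ):ℚ) := by
      rw [← Int.cast_sum]
      exact_mod_cast congrArg (fun z : ℤ => (z : ℚ)) (DSCB_col_sum m q g j)
    rw [this]
    push_cast
    field_simp

lemma DSCB_inj (m : ℕ) {q a q' a' : ℕ} {g g' : Fin (m+1) × Fin (m+1) → ℕ}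
    (hq : 0 < q) (hq' : 0 < q')
    (hco : Nat.Coprime a q) (hco' : Nat.Coprime a' q')
    (hSa : DSCBS m g + a = q) (hSa' : DSCBS m g' + a' = q')
    (heq : DSCBE m q g = DSCBE m q' g') : q = q' ∧ a = a' ∧ g = g' := by
  have hqQ : ((q:ℚ)) ≠ 0 := by positivity
  have hqQ' : ((q':ℚ)) ≠ 0 := by positivity
  -- step 1 : from the (0,0) entry
  have h00 : ((a:ℤ):ℚ) / ((q:ℤ):ℚ) = ((a':ℤ):ℚ) / ((q':ℤ):ℚ) := by
    have e := congrFun (congrFun heq 0) 0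
    simp only [DSCBE, Matrix.of_apply, DSCBN_zz] at e
    have e1 : (q : ℤ) - DSCBS m g = (a : ℤ) := by omega
    have e2 : (q' : ℤ) - DSCBS m g' = (a' : ℤ) := by omega
    rw [e1, e2] at e
    push_cast at e ⊢
    exact e
  have hco1 : Nat.Coprime (a:ℤ).natAbs (q:ℤ).natAbs := by
    simpa using hco
  have hco2 : Nat.Coprime (a':ℤ).natAbs (q':ℤ).natAbs := by
    simpa using hco'
  obtain ⟨haa, hqq⟩ := Rat.div_int_inj (by exact_mod_cast hq) (by exact_mod_cast hq') hco1 hco2 h00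
  have hqeq : q = q' := by exact_mod_cast hqq
  have haeq : a = a' := by exact_mod_cast haa
  subst hqeq
  refine ⟨rfl, haeq, ?_⟩
  -- step 2 : all numerators equal
  have hN : ∀ i j, DSCBN m q g i j = DSCBN m q g' i j := by
    intro i j
    have e := congrFun (congrFun heq i) j
    simp only [DSCBE, Matrix.of_apply] at e
    have h1 : ((DSCBN m q g i j : ℚ)) = ((DSCBN m q g' i j : ℚ)) := by
      field_simp at e
      exact_mod_cast e
    exact_mod_cast h1
  -- off-diagonal entries of g
  have hoff : ∀ i j : Fin (m+1), i ≠ j → g (i, j) = g' (i, j) := by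
    intro i j hij
    have := hN i.succ j.succ
    simp only [DSCBN_ss, if_neg hij] at this
    exact_mod_cast this
  -- columns
  have hcol : ∀ i : Fin (m+1), DSCBcol m g i = DSCBcol m g' i := by
    intro i
    have := hN i.succ 0
    simp only [DSCBN_sz] at this
    exact_mod_cast this
  have hdiag : ∀ i : Fin (m+1), g (i, i) = g' (i, i) := by
    intro i
    have h1 := hcol i
    rw [DSCBcol, DSCBcol, ← Finset.add_sum_erase _ _ (mem_univ i),
      ← Finset.add_sum_erase _ (fun k => g' (k, i)) (mem_univ i)] at h1
    have h2 : ∑ k ∈ univ.erase i, g (k, i) = ∑ k ∈ univ.erase i, g' (k, i) := by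
      apply Finset.sum_congr rfl
      intro k hk
      exact hoff k i (Finset.mem_erase.1 hk).1
    omega
  funext p
  obtain ⟨i, j⟩ := p
  by_cases hij : i = j
  · subst hij; exact hdiag i
  · exact hoff i j hij

lemma farey_finite (H : ℕ) : (Farey H).Finite := by
  apply Set.Finite.subset (Set.Finite.image (f := fun p : ℤ × ℕ => (p.1 : ℚ)/(p.2 : ℚ))
    ((Set.finite_Icc (-(H:ℤ)) H).prod (Set.finite_Icc 0 H)))
  intro α hα
  obtain ⟨h0, hnum, hden⟩ := hα
  refine ⟨(α.num, α.den), ⟨?_, ?_⟩, ?_⟩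
  · simp only [Set.mem_Icc]
    omega
  · simp only [Set.mem_Icc]
    omega
  · exact Rat.num_div_den α

lemma ds_finite (n H : ℕ) : Finite {A : Matrix (Fin n) (Fin n) ℚ //
    (∀ i j, A i j ∈ Farey H) ∧ (∀ i, ∑ j, A i j = 1) ∧ (∀ j, ∑ i, A i j = 1)} := by
  haveI : Finite (Farey H) := (farey_finite H).to_subtype
  apply Finite.of_injective
    (f := fun A : {A : Matrix (Fin n) (Fin n) ℚ //
      (∀ i j, A i j ∈ Farey H) ∧ (∀ i, ∑ j, A i j = 1) ∧ (∀ j, ∑ i, A i j = 1)} =>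
      (fun i j => (⟨A.1 i j, A.2.1 i j⟩ : Farey H)))
  intro A B h
  apply Subtype.ext
  funext i j
  have := congrFun (congrFun h i) j
  simpa using this

lemma ds_nonempty (n H : ℕ) (hH : 1 ≤ H) : Nonempty {A : Matrix (Fin n) (Fin n) ℚ //
    (∀ i j, A i j ∈ Farey H) ∧ (∀ i, ∑ j, A i j = 1) ∧ (∀ j, ∑ i, A i j = 1)} := by
  refine ⟨⟨(1 : Matrix (Fin n) (Fin n) ℚ), ?_, ?_, ?_⟩⟩
  · intro i j
    rw [Matrix.one_apply]
    by_cases h : i = j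
    · rw [if_pos h]
      exact ⟨by norm_num, by norm_num; omega, by norm_num; omega⟩
    · rw [if_neg h]
      exact ⟨le_refl 0, by norm_num, by norm_num; omega⟩
  · intro i
    simp [Matrix.one_apply]
  · intro j
    simp [Matrix.one_apply]

lemma DSCBS_eq_sum_univ (m : ℕ) (g : Fin (m+1) × Fin (m+1) → ℕ) :
    DSCBS m g = ∑ p : Fin (m+1) × Fin (m+1), g p := by
  rw [DSCBS]
  simp only [DSCBrow]
  rw [Fintype.sum_prod_type]

lemma main_bound (m H : ℕ) (hH : 288 ≤ H) :
    ((H:ℝ)^2/576) * ((H:ℝ)/((8*((m+1)*(m+1)) : ℕ) : ℝ))^((m+1)*(m+1)-1)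
      ≤ (doublyStochCount (m+2) H : ℝ) := by
  classical
  set K : ℕ := (m+1)*(m+1) with hK
  have hK1 : 1 ≤ K := Nat.one_le_iff_ne_zero.2 (by positivity)
  set T : ℕ := H/(8*K) with hT
  set Q : Finset ℕ := Finset.Ioc (H/2) H with hQ
  set A : Finset ℕ := (range (H/8)).image (fun k => 2*k+1) with hA
  set G : Finset (ℕ × ℕ) := (Q ×ˢ A).filter (fun z => Nat.Coprime z.2 z.1) with hG
  set p₀ : Fin (m+1) × Fin (m+1) := (0, 0) with hp₀
  set box : Finset (Fin (m+1) × Fin (m+1) → ℕ) :=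
    Fintype.piFinset (fun p => Finset.range (if p = p₀ then 1 else T+1)) with hbox
  set D : Finset ((ℕ × ℕ) × (Fin (m+1) × Fin (m+1) → ℕ)) := G ×ˢ box with hD
  -- the glued grid
  set glue : ((ℕ × ℕ) × (Fin (m+1) × Fin (m+1) → ℕ)) → (Fin (m+1) × Fin (m+1) → ℕ) :=
    fun t => Function.update t.2 p₀ (t.1.1 - (t.1.2 + ∑ p, t.2 p)) with hglue
  -- facts about members of D
  have hDfacts : ∀ t ∈ D, (H/2 < t.1.1 ∧ t.1.1 ≤ H) ∧ Nat.Coprime t.1.2 t.1.1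
      ∧ DSCBS m (glue t) + t.1.2 = t.1.1 := by
    rintro ⟨⟨q, a⟩, g⟩ ht
    simp only [hD, mem_product, hG, mem_filter, hQ, mem_Ioc, hA, mem_image, mem_range] at ht
    obtain ⟨⟨⟨⟨hq1, hq2⟩, ⟨k, hk, hak⟩⟩, hco⟩, hg⟩ := ht
    have hgle : ∀ p, g p ≤ T := by
      intro p
      have := (Fintype.mem_piFinset.1 hg) p
      rw [Finset.mem_range] at this
      by_cases hp : p = p₀
      · rw [if_pos hp] at this
        have h0 : g p = 0 := by omega
        rw [h0]
        exact Nat.zero_le _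
      · rw [if_neg hp] at this
        exact Nat.lt_succ_iff.mp this
    have hg0 : g p₀ = 0 := by
      have := (Fintype.mem_piFinset.1 hg) p₀
      rw [if_pos rfl, Finset.mem_range] at this
      omega
    have hsum : ∑ p, g p ≤ K * T := by
      calc ∑ p, g p ≤ ∑ _p : Fin (m+1) × Fin (m+1), T := Finset.sum_le_sum fun p _ => hgle p
        _ = K * T := by
          rw [Finset.sum_const, smul_eq_mul]
          congr 1
          simp [hK]
    have hKT : K * T ≤ H/8 := by
      have h1 : T = (H/8)/K := by rw [hT]; rw [Nat.div_div_eq_div_mul]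
      rw [h1, mul_comm]
      exact Nat.div_mul_le_self _ _
    have hsum8 : ∑ p, g p ≤ H/8 := le_trans hsum hKT
    have hbudget : a + ∑ p, g p ≤ H/2 := by
      have h38 : 3*(H/8) ≤ H/2 := by omega
      omega
    refine ⟨⟨hq1, hq2⟩, hco, ?_⟩
    -- DSCBS of glued
    have hglueS : DSCBS m (glue ((q,a),g)) = (q - (a + ∑ p, g p)) + ∑ p, g p := by
      rw [DSCBS_eq_sum_univ]
      simp only [hglue]
      rw [Finset.sum_update_of_mem (mem_univ p₀)]
      congr 1
      rw [Finset.sdiff_singleton_eq_erase]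
      rw [Finset.sum_erase _ hg0]
    show DSCBS m (glue ((q,a),g)) + a = q
    rw [hglueS]
    omega
  -- membership of images
  have hmem : ∀ t ∈ D, (∀ i j, DSCBE m t.1.1 (glue t) i j ∈ Farey H)
      ∧ (∀ i, ∑ j, DSCBE m t.1.1 (glue t) i j = 1)
      ∧ (∀ j, ∑ i, DSCBE m t.1.1 (glue t) i j = 1) := by
    intro t ht
    obtain ⟨⟨hq1, hq2⟩, hco, hSa⟩ := hDfacts t ht
    exact DSCBE_mem m H t.1.1 (glue t) (by omega) hq2 (by omega)
  -- injectivity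
  have hinj : Set.InjOn (fun t => DSCBE m t.1.1 (glue t)) D := by
    rintro ⟨⟨q, a⟩, g⟩ ht ⟨⟨q', a'⟩, g'⟩ ht' heq
    obtain ⟨⟨hq1, hq2⟩, hco, hSa⟩ := hDfacts _ ht
    obtain ⟨⟨hq1', hq2'⟩, hco', hSa'⟩ := hDfacts _ ht'
    have hq0 : 0 < q := by
      have : H/2 < q := hq1
      omega
    have hq0' : 0 < q' := by
      have : H/2 < q' := hq1'
      omega
    obtain ⟨e1, e2, e3⟩ := DSCB_inj m hq0 hq0' hco hco' hSa hSa' heq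
    -- recover g from glue
    have htD : (((q,a),g) : (ℕ × ℕ) × (Fin (m+1) × Fin (m+1) → ℕ)) ∈ D := ht
    have htD' : (((q',a'),g') : (ℕ × ℕ) × (Fin (m+1) × Fin (m+1) → ℕ)) ∈ D := ht'
    have hg0 : g p₀ = 0 := by
      have := (Fintype.mem_piFinset.1 (Finset.mem_product.1 htD).2) p₀
      rw [if_pos rfl, Finset.mem_range] at this
      dsimp only at this
      omega
    have hg0' : g' p₀ = 0 := by
      have := (Fintype.mem_piFinset.1 (Finset.mem_product.1 htD').2) p₀
      rw [if_pos rfl, Finset.mem_range] at this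
      dsimp only at this
      omega
    have hgg : g = g' := by
      funext p
      by_cases hp : p = p₀
      · rw [hp, hg0, hg0']
      · have := congrFun e3 p
        simpa [hglue, Function.update_of_ne hp] using this
    simp only [Prod.mk.injEq]
    exact ⟨⟨e1, e2⟩, hgg⟩
  -- cardinality chain
  haveI := ds_finite (m+2) H
  have hcard1 : D.card ≤ doublyStochCount (m+2) H := by
    rw [doublyStochCount]
    have := Nat.card_le_card_of_injective
      (f := fun t : ↥D => (⟨DSCBE m t.1.1.1 (glue t.1), hmem t.1 t.2⟩ :
        {A : Matrix (Fin (m+2)) (Fin (m+2)) ℚ //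
          (∀ i j, A i j ∈ Farey H) ∧ (∀ i, ∑ j, A i j = 1) ∧ (∀ j, ∑ i, A i j = 1)}))
      (by
        rintro ⟨t, ht⟩ ⟨t', ht'⟩ h
        have : DSCBE m t.1.1 (glue t) = DSCBE m t'.1.1 (glue t') := by
          simpa using congrArg Subtype.val h
        exact Subtype.ext (hinj ht ht' this))
    rwa [Nat.card_eq_finsetCard] at this
  -- cardinality of D
  have hboxcard : box.card = (T+1)^(K-1) := by
    rw [hbox, Fintype.card_piFinset]
    simp only [Finset.card_range]
    rw [← Finset.mul_prod_erase _ _ (mem_univ p₀), if_pos rfl, one_mul]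
    rw [Finset.prod_congr rfl (fun p hp => if_neg (Finset.mem_erase.1 hp).1)]
    rw [Finset.prod_const]
    congr 1
    rw [Finset.card_erase_of_mem (mem_univ p₀), Finset.card_univ]
    simp [hK]
  have hDcard : D.card = G.card * (T+1)^(K-1) := by
    rw [hD, Finset.card_product, hboxcard]
  -- real arithmetic
  have hTreal : (H:ℝ)/((8*K : ℕ) : ℝ) ≤ ((T+1 : ℕ) : ℝ) := by
    have h8K : 0 < 8*K := by positivity
    have h1 : 8*K*(H/(8*K)) + H%(8*K) = H := Nat.div_add_mod H (8*K)
    have h2 : H%(8*K) < 8*K := Nat.mod_lt H h8K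
    have h3 : H < 8*K*(H/(8*K)) + 8*K := by omega
    have h4 : H < (8*K) * (T+1) := by
      rw [hT, Nat.mul_add, Nat.mul_one]
      exact h3
    have h5 : (H:ℝ) < ((8*K : ℕ):ℝ) * ((T+1:ℕ):ℝ) := by exact_mod_cast h4
    have h6 : (0:ℝ) < ((8*K : ℕ):ℝ) := by
      exact_mod_cast h8K
    rw [div_le_iff₀ h6]
    nlinarith
  have hGreal : (H:ℝ)^2/576 ≤ (G.card : ℝ) := good_pairs_count H hH
  have hpow : ((H:ℝ)/((8*((m+1)*(m+1)) : ℕ) : ℝ))^((m+1)*(m+1)-1) ≤ (((T+1)^(K-1) : ℕ) : ℝ) := by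
    have e1 : (((T+1)^(K-1) : ℕ) : ℝ) = (((T+1 : ℕ):ℝ))^(K-1) := by push_cast; ring
    rw [e1]
    apply pow_le_pow_left₀ (by positivity)
    exact hTreal
  calc ((H:ℝ)^2/576) * ((H:ℝ)/((8*((m+1)*(m+1)) : ℕ) : ℝ))^((m+1)*(m+1)-1)
      ≤ (G.card : ℝ) * (((T+1)^(K-1) : ℕ) : ℝ) := by
        apply mul_le_mul hGreal hpow (by positivity) (Nat.cast_nonneg _)
    _ = (D.card : ℝ) := by rw [hDcard]; push_cast; ring
    _ ≤ (doublyStochCount (m+2) H : ℝ) := by exact_mod_cast hcard1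


/-- Fix `n ≥ 2`. There is `c > 0` such that for every integer
`H ≥ 2`, `𝐒ₙ(H) ≥ c · H^(n² − 2n + 2)`. -/
theorem doubly_stochastic_count_lower_bound (n : ℕ) (hn : 2 ≤ n) :
    ∃ c : ℝ, 0 < c ∧ ∀ H : ℕ, 2 ≤ H →
      c * (H : ℝ) ^ (n ^ 2 - 2 * n + 2) ≤ (doublyStochCount n H : ℝ) := by
  obtain ⟨m, rfl⟩ : ∃ m, n = m + 2 := ⟨n - 2, by omega⟩
  set K : ℕ := (m+1)*(m+1) with hK
  have hK1 : 1 ≤ K := Nat.one_le_iff_ne_zero.2 (by positivity)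
  have hE : (m+2)^2 - 2*(m+2) + 2 = K + 1 := by
    have h1 : (m+2)^2 = m*m + 4*m + 4 := by ring
    have h2 : (m+1)*(m+1) = m*m + 2*m + 1 := by ring
    omega
  have h8K : (0:ℝ) < ((8*K : ℕ) : ℝ) := by
    have : 0 < 8*K := by positivity
    exact_mod_cast this
  have h8K1 : (1:ℝ) ≤ ((8*K : ℕ) : ℝ) := by
    have : 1 ≤ 8*K := by omega
    exact_mod_cast this
  refine ⟨(1/576) * (1/((8*K : ℕ) : ℝ))^(K-1) * (1/288)^(K+1), ?_, ?_⟩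
  · have e1 : (0:ℝ) < 1/((8*K : ℕ) : ℝ) := by positivity
    positivity
  · intro H hH
    rw [hE]
    by_cases hcase : 288 ≤ H
    · have hmb := main_bound m H hcase
      have hpowsplit : (H:ℝ)^(K+1) = (H:ℝ)^2 * (H:ℝ)^(K-1) := by
        rw [← pow_add]
        congr 1
        omega
      have e2 : ((1:ℝ)/((8*K:ℕ):ℝ))^(K-1) * (H:ℝ)^(K-1) = ((H:ℝ)/((8*K:ℕ):ℝ))^(K-1) := by
        rw [← mul_pow]
        congr 1
        ring
      have hfac : ((1:ℝ)/288)^(K+1) ≤ 1 := pow_le_one₀ (by norm_num) (by norm_num)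
      have hmbnn : (0:ℝ) ≤ ((H:ℝ)^2/576) * ((H:ℝ)/((8*K : ℕ) : ℝ))^(K-1) := by positivity
      calc (1/576) * (1/((8*K : ℕ) : ℝ))^(K-1) * (1/288)^(K+1) * (H : ℝ)^(K+1)
          = ((1:ℝ)/288)^(K+1) * (((H:ℝ)^2/576) * (((1:ℝ)/((8*K:ℕ):ℝ))^(K-1) * (H:ℝ)^(K-1))) := by
            rw [hpowsplit]; ring
        _ = ((1:ℝ)/288)^(K+1) * (((H:ℝ)^2/576) * ((H:ℝ)/((8*K:ℕ):ℝ))^(K-1)) := by rw [e2]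
        _ ≤ 1 * (((H:ℝ)^2/576) * ((H:ℝ)/((8*K:ℕ):ℝ))^(K-1)) :=
            mul_le_mul_of_nonneg_right hfac hmbnn
        _ = ((H:ℝ)^2/576) * ((H:ℝ)/((8*((m+1)*(m+1)):ℕ):ℝ))^((m+1)*(m+1)-1) := by
            rw [one_mul]
        _ ≤ (doublyStochCount (m+2) H : ℝ) := hmb
    · -- small H
      have hcount1 : 1 ≤ doublyStochCount (m+2) H := by
        rw [doublyStochCount]
        haveI := ds_finite (m+2) H
        haveI := ds_nonempty (m+2) H (by omega)
        exact Nat.card_pos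
      have hcount1R : (1:ℝ) ≤ (doublyStochCount (m+2) H : ℝ) := by exact_mod_cast hcount1
      have e3 : ((1:ℝ)/288)^(K+1) * (H:ℝ)^(K+1) = ((H:ℝ)/288)^(K+1) := by
        rw [← mul_pow]
        congr 1
        ring
      have hH288 : (H:ℝ)/288 ≤ 1 := by
        rw [div_le_one (by norm_num)]
        have : H ≤ 288 := by omega
        exact_mod_cast this
      have hH288' : (0:ℝ) ≤ (H:ℝ)/288 := by positivity
      have hb1 : ((H:ℝ)/288)^(K+1) ≤ 1 := pow_le_one₀ hH288' hH288
      have hb2 : ((1:ℝ)/((8*K:ℕ):ℝ))^(K-1) ≤ 1 := by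
        apply pow_le_one₀ (by positivity)
        rw [div_le_one h8K]
        exact h8K1
      have hb2' : (0:ℝ) ≤ ((1:ℝ)/((8*K:ℕ):ℝ))^(K-1) := by positivity
      calc (1/576) * (1/((8*K : ℕ) : ℝ))^(K-1) * (1/288)^(K+1) * (H : ℝ)^(K+1)
          = (1/576) * ((1/((8*K : ℕ) : ℝ))^(K-1) * (((1:ℝ)/288)^(K+1) * (H:ℝ)^(K+1))) := by
            ring
        _ = (1/576) * ((1/((8*K : ℕ) : ℝ))^(K-1) * ((H:ℝ)/288)^(K+1)) := by rw [e3]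
        _ ≤ (1/576) * (1 * 1) := by
            apply mul_le_mul_of_nonneg_left _ (by norm_num)
            apply mul_le_mul hb2 hb1 (by positivity) (by norm_num)
        _ ≤ 1 := by norm_num
        _ ≤ (doublyStochCount (m+2) H : ℝ) := hcount1R
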